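/- For all μ, ν ∈ ℕ, the rational number μ·ν/n − Σ_p ((μ mod p^{e_p}) · ((ν·t_p) mod p^{e_p})) / p^{e_p}, where the sum runs over the prime divisors p of n, is an integer. (Equivalently, Good's factorization of characters holds: e^{2πi·μν/n} = Π_p e^{2πi·(μ mod p^{e_p})·((ν t_p) mod p^{e_p})/p^{e_p}}.) -/

import Mathlib

/-- Good's factorization of the characters of `ℤ/nℤ`: for all `μ, ν ∈ ℕ`, the rational number
`μν/n − Σ_p ((μ mod p^(e_p)) · ((ν t_p) mod p^(e_p))) / p^(e_p)` (sum over the prime divisors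
`p` of `n`, `e_p` the exponent of `p` in `n`, `t_p` an inverse of `u_p = n / p^(e_p)` modulo
`p^(e_p)`) is an integer; equivalently
`e^{2πi μν/n} = Π_p e^{2πi (μ mod p^(e_p))((ν t_p) mod p^(e_p))/p^(e_p)}`. -/
theorem stmt_15 (n : ℕ) (hn : 2 ≤ n) (t : ℕ → ℕ)
    (ht : ∀ p ∈ n.primeFactors,
      t p * (n / p ^ n.factorization p) ≡ 1 [MOD p ^ n.factorization p]) :
    ∀ μ ν : ℕ, ∃ z : ℤ,
      ((μ * ν : ℕ) : ℚ) / (n : ℚ) -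
          ∑ p ∈ n.primeFactors,
            (((μ % p ^ n.factorization p) * ((ν * t p) % p ^ n.factorization p) : ℕ) : ℚ) /
              ((p ^ n.factorization p : ℕ) : ℚ) = (z : ℚ) := by
  intro μ ν
  have hn0 : n ≠ 0 := by omega
  have hnQ : (n : ℚ) ≠ 0 := by exact_mod_cast hn0
  set pf := n.primeFactors with hpf
  set e : ℕ → ℕ := fun p => n.factorization p with he
  have hq0 : ∀ p ∈ pf, ((p ^ e p : ℕ) : ℚ) ≠ 0 := by
    intro p hp
    have hp' : p.Prime := Nat.prime_of_mem_primeFactors hp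
    have : p ^ e p ≠ 0 := pow_ne_zero _ hp'.pos.ne'
    exact_mod_cast this
  have hqu : ∀ p ∈ pf, p ^ e p * (n / p ^ e p) = n := by
    intro p _
    exact Nat.ordProj_mul_ordCompl_eq_self n p
  -- S = Σ t p * u p  and  n ∣ S - 1 in ℤ
  set S : ℕ := ∑ p ∈ pf, t p * (n / p ^ e p) with hS
  have hdvd1 : ∀ p ∈ pf, ((p ^ e p : ℕ) : ℤ) ∣ (S : ℤ) - 1 := by
    intro p hp
    have h1 : ((p ^ e p : ℕ) : ℤ) ∣ (1 : ℤ) - ((t p * (n / p ^ e p) : ℕ) : ℤ) :=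
      (Nat.modEq_iff_dvd).mp (ht p hp)
    have h2 : ((p ^ e p : ℕ) : ℤ) ∣ (S : ℤ) - ((t p * (n / p ^ e p) : ℕ) : ℤ) := by
      have heq : (S : ℤ) - ((t p * (n / p ^ e p) : ℕ) : ℤ) =
          ∑ q ∈ pf.erase p, ((t q * (n / q ^ e q) : ℕ) : ℤ) := by
        rw [hS, Nat.cast_sum, ← Finset.sum_erase_add pf _ hp]
        ring
      rw [heq]
      refine Finset.dvd_sum ?_
      intro q hq
      have hqp : q ≠ p := Finset.ne_of_mem_erase hq
      have hq' : q ∈ pf := Finset.mem_of_mem_erase hq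
      have hdvd : (p ^ e p : ℕ) ∣ n / q ^ e q := by
        refine Nat.dvd_ordCompl_of_dvd_not_dvd (Nat.ordProj_dvd n p) ?_
        intro hcon
        have hqprime : q.Prime := Nat.prime_of_mem_primeFactors hq'
        have hpprime : p.Prime := Nat.prime_of_mem_primeFactors hp
        exact hqp ((Nat.prime_dvd_prime_iff_eq hqprime hpprime).mp
          (Nat.Prime.dvd_of_dvd_pow hqprime hcon))
      exact Dvd.dvd.natCast (hdvd.mul_left _)
    have := h2.sub h1
    simpa using this
  have hndvd : (n : ℤ) ∣ (S : ℤ) - 1 := by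
    have hprod : ∏ p ∈ pf, ((p ^ e p : ℕ) : ℤ) = (n : ℤ) := by
      rw [← Nat.cast_prod]
      norm_cast
      rw [hpf, he]
      rw [← Nat.prod_factorization_eq_prod_primeFactors (f := fun p k => p ^ k)]
      exact Nat.factorization_prod_pow_eq_self hn0
    rw [← hprod]
    refine Finset.prod_dvd_of_coprime ?_ hdvd1
    intro p hp q hq hpq
    have hpprime : Nat.Prime p := Nat.prime_of_mem_primeFactors hp
    have hqprime : Nat.Prime q := Nat.prime_of_mem_primeFactors hq
    have : Nat.Coprime (p ^ e p) (q ^ e q) :=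
      Nat.Coprime.pow _ _ ((Nat.coprime_primes hpprime hqprime).mpr hpq)
    exact (Nat.isCoprime_iff_coprime).mpr this
  -- main computation
  obtain ⟨z1, hz1⟩ : ∃ z1 : ℤ, ((μ * ν : ℕ) : ℤ) * ((S : ℤ) - 1) = (n : ℤ) * z1 := by
    obtain ⟨c, hc⟩ := hndvd.mul_left ((μ * ν : ℕ) : ℤ)
    exact ⟨c, by linarith [hc]⟩
  -- per-prime integer corrections
  have hz2 : ∀ p ∈ pf, ((p ^ e p : ℕ) : ℤ) ∣
      ((μ * ν : ℕ) : ℤ) * t p - ((μ % p ^ e p) * ((ν * t p) % p ^ e p) : ℕ) := by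
    intro p hp
    have h1 : (μ % p ^ e p) * ((ν * t p) % p ^ e p) ≡ μ * (ν * t p) [MOD p ^ e p] :=
      Nat.ModEq.mul (Nat.mod_modEq μ _) (Nat.mod_modEq (ν * t p) _)
    have h2 := (Nat.modEq_iff_dvd).mp h1
    have heq2 : ((μ * (ν * t p) : ℕ) : ℤ) - ((μ % p ^ e p) * ((ν * t p) % p ^ e p) : ℕ)
        = ((μ * ν : ℕ) : ℤ) * t p - ((μ % p ^ e p) * ((ν * t p) % p ^ e p) : ℕ) := by
      push_cast; ring
    rw [← heq2]
    exact h2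
  set Z2 : ℕ → ℤ := fun p =>
    (((μ * ν : ℕ) : ℤ) * t p - ((μ % p ^ e p) * ((ν * t p) % p ^ e p) : ℕ)) /
      ((p ^ e p : ℕ) : ℤ) with hZ2
  have hterm : ∀ p ∈ pf,
      ((μ * ν : ℕ) : ℚ) * t p / ((p ^ e p : ℕ) : ℚ) -
        (((μ % p ^ e p) * ((ν * t p) % p ^ e p) : ℕ) : ℚ) / ((p ^ e p : ℕ) : ℚ)
        = ((Z2 p : ℤ) : ℚ) := by
    intro p hp
    have hd := hz2 p hp
    have hmul : Z2 p * ((p ^ e p : ℕ) : ℤ)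
        = ((μ * ν : ℕ) : ℤ) * t p - ((μ % p ^ e p) * ((ν * t p) % p ^ e p) : ℕ) :=
      Int.ediv_mul_cancel hd
    rw [div_sub_div_same, div_eq_iff (hq0 p hp), eq_comm]
    exact_mod_cast congrArg (fun x : ℤ => (x : ℚ)) hmul
  -- the sum over primes of μν t_p / q_p equals μν S / n
  have h5 : ∀ p ∈ pf, ((μ * ν : ℕ) : ℚ) * ((t p * (n / p ^ e p) : ℕ) : ℚ) / (n : ℚ)
      = ((μ * ν : ℕ) : ℚ) * t p / ((p ^ e p : ℕ) : ℚ) := by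
    intro p hp
    have hq := hqu p hp
    have hqQ : ((p ^ e p : ℕ) : ℚ) * ((n / p ^ e p : ℕ) : ℚ) = (n : ℚ) := by
      exact_mod_cast congrArg (fun m : ℕ => (m : ℚ)) hq
    rw [div_eq_div_iff hnQ (hq0 p hp)]
    push_cast at hqQ ⊢
    linear_combination ((μ : ℚ) * ν * t p) * hqQ
  have hsum : ((μ * ν : ℕ) : ℚ) * (S : ℚ) / (n : ℚ)
      = ∑ p ∈ pf, ((μ * ν : ℕ) : ℚ) * t p / ((p ^ e p : ℕ) : ℚ) := by
    rw [hS, Nat.cast_sum, Finset.mul_sum, Finset.sum_div]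
    exact Finset.sum_congr rfl h5
  have hz1Q : ((μ * ν : ℕ) : ℚ) * ((S : ℚ) - 1) = (n : ℚ) * (z1 : ℚ) := by
    exact_mod_cast congrArg (fun x : ℤ => (x : ℚ)) hz1
  have hmain : ((μ * ν : ℕ) : ℚ) / (n : ℚ)
      = (∑ p ∈ pf, ((μ * ν : ℕ) : ℚ) * t p / ((p ^ e p : ℕ) : ℚ)) - (z1 : ℚ) := by
    rw [← hsum, div_sub' hnQ, div_eq_div_iff hnQ hnQ]
    ring_nf
    ring_nf at hz1Q
    nlinarith [hz1Q]
  refine ⟨(∑ p ∈ pf, Z2 p) - z1, ?_⟩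
  rw [hmain, Int.cast_sub, Int.cast_sum, ← Finset.sum_congr rfl hterm,
    Finset.sum_sub_distrib]
  ring
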